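/- Let H be a Hadamard matrix of order n ≥ 3. Then the number Z(3,H) of 3 × 3 submatrices of H (over all choices of 3 rows and 3 columns) with determinant zero equals n²·(n-1)·(n-2)·(n-4)·(5n-4)/288. -/
import Mathlib

open Matrix Finset

/-- The determinant of a `3 × 3` sign matrix is `0` or `±4`. -/
lemma det_pm_one (M : Matrix (Fin 3) (Fin 3) ℤ) (h : ∀ i j, M i j = 1 ∨ M i j = -1) :
    M.det = 0 ∨ M.det ^ 2 = 16 := by
  rw [Matrix.det_fin_three]
  rcases h 0 0 with h₀|h₀ <;> rcases h 0 1 with h₁|h₁ <;> rcases h 0 2 with h₂|h₂ <;>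
    rcases h 1 0 with h₃|h₃ <;> rcases h 1 1 with h₄|h₄ <;> rcases h 1 2 with h₅|h₅ <;>
    rcases h 2 0 with h₆|h₆ <;> rcases h 2 1 with h₇|h₇ <;> rcases h 2 2 with h₈|h₈ <;>
    rw [h₀, h₁, h₂, h₃, h₄, h₅, h₆, h₇, h₈] <;> decide

/-- Two strictly monotone maps composed with permutations that agree are equal. -/
lemma strictMono_eq_of_comp_perm {n : ℕ} {g₁ g₂ : Fin 3 → Fin n}
    (h₁ : StrictMono g₁) (h₂ : StrictMono g₂) (σ₁ σ₂ : Equiv.Perm (Fin 3))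
    (h : g₁ ∘ σ₁ = g₂ ∘ σ₂) : g₁ = g₂ := by
  have himg : Finset.image g₁ Finset.univ = Finset.image g₂ Finset.univ := by
    have e1 : Finset.image g₁ Finset.univ = Finset.image (g₁ ∘ σ₁) Finset.univ := by
      rw [← Finset.image_image]
      congr 1
      exact (Finset.image_univ_equiv σ₁).symm
    have e2 : Finset.image g₂ Finset.univ = Finset.image (g₂ ∘ σ₂) Finset.univ := by
      rw [← Finset.image_image]
      congr 1
      exact (Finset.image_univ_equiv σ₂).symm
    rw [e1, e2, h]
  have hc : (Finset.image g₁ Finset.univ).card = 3 := by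
    rw [Finset.card_image_of_injective _ h₁.injective, Finset.card_univ, Fintype.card_fin]
  have u1 : g₁ = (Finset.image g₁ Finset.univ).orderEmbOfFin hc :=
    Finset.orderEmbOfFin_unique hc (fun x => Finset.mem_image_of_mem g₁ (Finset.mem_univ x)) h₁
  have u2 : g₂ = (Finset.image g₁ Finset.univ).orderEmbOfFin hc :=
    Finset.orderEmbOfFin_unique hc
      (fun x => himg ▸ Finset.mem_image_of_mem g₂ (Finset.mem_univ x)) h₂
  rw [u1, u2]

/-- Cauchy–Binet for a `3 × n` matrix with orthogonal rows of norm `n`. -/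
lemma sum_det_sq {n : ℕ} (A : Matrix (Fin 3) (Fin n) ℤ)
    (hA : A * Aᵀ = (n : ℤ) • (1 : Matrix (Fin 3) (Fin 3) ℤ)) :
    ∑ g : {g : Fin 3 → Fin n // StrictMono g}, (A.submatrix id g.1).det ^ 2 = (n : ℤ) ^ 3 := by
  classical
  have expand : (A * Aᵀ).det
      = ∑ g : Fin 3 → Fin n, (A.submatrix id g).det * ∏ i, A i (g i) := by
    calc (A * Aᵀ).det
        = ∑ σ : Equiv.Perm (Fin 3), Equiv.Perm.sign σ • ∏ i, (A * Aᵀ) (σ i) i :=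
          Matrix.det_apply _
      _ = ∑ σ : Equiv.Perm (Fin 3), ∑ g : Fin 3 → Fin n,
            Equiv.Perm.sign σ • ∏ i, (A (σ i) (g i) * A i (g i)) := by
          refine Finset.sum_congr rfl fun σ _ => ?_
          rw [← Finset.smul_sum]
          congr 1
          simp only [Matrix.mul_apply, Matrix.transpose_apply]
          rw [Finset.prod_univ_sum]
          rw [Fintype.piFinset_univ]
      _ = ∑ g : Fin 3 → Fin n, ∑ σ : Equiv.Perm (Fin 3),
            Equiv.Perm.sign σ • ∏ i, (A (σ i) (g i) * A i (g i)) := Finset.sum_comm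
      _ = ∑ g : Fin 3 → Fin n, (A.submatrix id g).det * ∏ i, A i (g i) := by
          refine Finset.sum_congr rfl fun g _ => ?_
          rw [Matrix.det_apply, Finset.sum_mul]
          refine Finset.sum_congr rfl fun σ _ => ?_
          rw [Finset.prod_mul_distrib, smul_mul_assoc]
          congr 1
  have zero_noninj : ∀ g : Fin 3 → Fin n, ¬ Function.Injective g →
      (A.submatrix id g).det = 0 := by
    intro g hg
    rw [Function.not_injective_iff] at hg
    obtain ⟨a, b, hab, hne⟩ := hg
    exact Matrix.det_zero_of_column_eq hne (fun k => by simp [Matrix.submatrix_apply, hab])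
  have hsplit : ∑ g : Fin 3 → Fin n, (A.submatrix id g).det * ∏ i, A i (g i)
      = ∑ g ∈ Finset.univ.filter (fun g : Fin 3 → Fin n => Function.Injective g),
          (A.submatrix id g).det * ∏ i, A i (g i) := by
    symm
    apply Finset.sum_subset (Finset.filter_subset _ _)
    intro g _ hg
    simp only [Finset.mem_filter, Finset.mem_univ, true_and] at hg
    rw [zero_noninj g hg, zero_mul]
  have hbij : ∑ g ∈ Finset.univ.filter (fun g : Fin 3 → Fin n => Function.Injective g),
        (A.submatrix id g).det * ∏ i, A i (g i)
      = ∑ p : {g : Fin 3 → Fin n // StrictMono g} × Equiv.Perm (Fin 3),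
          (A.submatrix id (p.1.1 ∘ p.2)).det * ∏ i, A i (p.1.1 (p.2 i)) := by
    symm
    refine Finset.sum_bij (fun p _ => p.1.1 ∘ p.2) ?_ ?_ ?_ ?_
    · intro p _
      simp only [Finset.mem_filter, Finset.mem_univ, true_and]
      exact p.1.2.injective.comp p.2.injective
    · intro p₁ _ p₂ _ hpq
      have hg : p₁.1.1 = p₂.1.1 := strictMono_eq_of_comp_perm p₁.1.2 p₂.1.2 p₁.2 p₂.2 hpq
      have hσ : (p₁.2 : Equiv.Perm (Fin 3)) = p₂.2 := Equiv.ext fun i => by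
        have h := congrFun hpq i
        simp only [Function.comp_apply] at h
        rw [hg] at h
        exact p₂.1.2.injective h
      exact Prod.ext (Subtype.ext hg) hσ
    · intro g hg
      simp only [Finset.mem_filter, Finset.mem_univ, true_and] at hg
      have hs : (Finset.image g Finset.univ).card = 3 := by
        rw [Finset.card_image_of_injective _ hg, Finset.card_univ, Fintype.card_fin]
      set s := Finset.image g Finset.univ with hs_def
      have hmem : ∀ i, g i ∈ s := fun i => Finset.mem_image_of_mem g (Finset.mem_univ i)
      have hrange : ∀ i, ∃ j, s.orderEmbOfFin hs j = g i := by
        intro i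
        have : g i ∈ Set.range (s.orderEmbOfFin hs) := by
          rw [Finset.range_orderEmbOfFin]
          exact hmem i
        exact this
      choose σ' hσ' using hrange
      have hinj : Function.Injective σ' := by
        intro a b hab
        apply hg
        rw [← hσ' a, ← hσ' b, hab]
      let σ : Equiv.Perm (Fin 3) := Equiv.ofBijective σ' (Finite.injective_iff_bijective.mp hinj)
      refine ⟨⟨⟨s.orderEmbOfFin hs, (s.orderEmbOfFin hs).strictMono⟩, σ⟩, Finset.mem_univ _, ?_⟩
      funext i
      exact hσ' i
    · intro p _
      rfl
  have hprod : ∑ p : {g : Fin 3 → Fin n // StrictMono g} × Equiv.Perm (Fin 3),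
        (A.submatrix id (p.1.1 ∘ p.2)).det * ∏ i, A i (p.1.1 (p.2 i))
      = ∑ g : {g : Fin 3 → Fin n // StrictMono g}, (A.submatrix id g.1).det ^ 2 := by
    rw [Fintype.sum_prod_type]
    refine Finset.sum_congr rfl fun g _ => ?_
    have hperm : ∀ σ : Equiv.Perm (Fin 3),
        (A.submatrix id (g.1 ∘ σ)).det
          = (Equiv.Perm.sign σ : ℤ) * (A.submatrix id g.1).det := by
      intro σ
      have : A.submatrix id (g.1 ∘ σ) = (A.submatrix id g.1).submatrix id σ := by
        rw [Matrix.submatrix_submatrix]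
        rfl
      rw [this, Matrix.det_permute']
      norm_cast
    have hdetT : (A.submatrix id g.1)ᵀ.det
        = ∑ σ : Equiv.Perm (Fin 3), (Equiv.Perm.sign σ : ℤ) * ∏ i, A i (g.1 (σ i)) := by
      rw [Matrix.det_apply]
      refine Finset.sum_congr rfl fun σ _ => ?_
      simp only [Matrix.transpose_apply, Matrix.submatrix_apply, id_eq, Units.smul_def,
        smul_eq_mul]
    calc ∑ σ : Equiv.Perm (Fin 3),
          (A.submatrix id (g.1 ∘ σ)).det * ∏ i, A i (g.1 (σ i))
        = ∑ σ : Equiv.Perm (Fin 3), (A.submatrix id g.1).det *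
            ((Equiv.Perm.sign σ : ℤ) * ∏ i, A i (g.1 (σ i))) := by
          refine Finset.sum_congr rfl fun σ _ => ?_
          rw [hperm σ]; ring
      _ = (A.submatrix id g.1).det * ∑ σ : Equiv.Perm (Fin 3),
            (Equiv.Perm.sign σ : ℤ) * ∏ i, A i (g.1 (σ i)) := by
          rw [Finset.mul_sum]
      _ = (A.submatrix id g.1).det * (A.submatrix id g.1)ᵀ.det := by rw [hdetT]
      _ = (A.submatrix id g.1).det ^ 2 := by
          rw [Matrix.det_transpose]; ring
  have hdet : (A * Aᵀ).det = (n : ℤ) ^ 3 := by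
    rw [hA, Matrix.smul_eq_diagonal_mul]
    simp [Matrix.det_fin_three, Matrix.diagonal]
    ring
  rw [← hprod, ← hbij, ← hsplit, ← expand, hdet]

/-- There are `n.choose 3` strictly monotone maps `Fin 3 → Fin n`. -/
lemma card_strictMono_fin3 (n : ℕ) :
    Fintype.card {f : Fin 3 → Fin n // StrictMono f} = n.choose 3 := by
  classical
  have e : {f : Fin 3 → Fin n // StrictMono f} ≃ {s : Finset (Fin n) // s.card = 3} :=
    { toFun := fun f => ⟨Finset.image f.1 Finset.univ, by
        rw [Finset.card_image_of_injective _ f.2.injective, Finset.card_univ,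
          Fintype.card_fin]⟩
      invFun := fun s => ⟨s.1.orderEmbOfFin s.2, (s.1.orderEmbOfFin s.2).strictMono⟩
      left_inv := fun f => by
        apply Subtype.ext
        exact (Finset.orderEmbOfFin_unique _
          (fun x => Finset.mem_image_of_mem f.1 (Finset.mem_univ x)) f.2).symm
      right_inv := fun s => by
        apply Subtype.ext
        apply Finset.coe_injective
        rw [Finset.coe_image, Finset.coe_univ, Set.image_univ,
          Finset.range_orderEmbOfFin] }
  rw [Fintype.card_congr e, Fintype.card_finset_len, Fintype.card_fin]

/-- For a Hadamard matrix `H` of order `n ≥ 3`, the number `Z(3,H)` of `3 × 3`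
submatrices with zero determinant (over all pairs of strictly monotone index
maps `Fin 3 → Fin n`) equals `n^2 (n-1) (n-2) (n-4) (5n-4) / 288`. -/
theorem zero_minors_order_three_hadamard (n : ℕ) (hn : 3 ≤ n)
    (H : Matrix (Fin n) (Fin n) ℤ) (hH1 : ∀ i j, H i j = 1 ∨ H i j = -1)
    (hH : H * Hᵀ = (n : ℤ) • (1 : Matrix (Fin n) (Fin n) ℤ)) :
    ((Finset.univ.filter
        (fun p : {f : Fin 3 → Fin n // StrictMono f} × {g : Fin 3 → Fin n // StrictMono g} =>
          (H.submatrix p.1.1 p.2.1).det = 0)).card : ℚ) =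
      (n : ℚ) ^ 2 * ((n : ℚ) - 1) * ((n : ℚ) - 2) * ((n : ℚ) - 4) *
        (5 * (n : ℚ) - 4) / 288 := by
  classical
  set C := n.choose 3 with hCdef
  -- total sum of squares of determinants
  have hsum : ∑ p : {f : Fin 3 → Fin n // StrictMono f} × {g : Fin 3 → Fin n // StrictMono g},
      (H.submatrix p.1.1 p.2.1).det ^ 2 = (C : ℤ) * (n : ℤ) ^ 3 := by
    rw [Fintype.sum_prod_type]
    have inner : ∀ f : {f : Fin 3 → Fin n // StrictMono f},
        ∑ g : {g : Fin 3 → Fin n // StrictMono g},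
          (H.submatrix f.1 g.1).det ^ 2 = (n : ℤ) ^ 3 := by
      intro f
      have hA : (H.submatrix f.1 id) * (H.submatrix f.1 id)ᵀ
          = (n : ℤ) • (1 : Matrix (Fin 3) (Fin 3) ℤ) := by
        ext i j
        have key : (H * Hᵀ) (f.1 i) (f.1 j)
            = ((n : ℤ) • (1 : Matrix (Fin n) (Fin n) ℤ)) (f.1 i) (f.1 j) := by rw [hH]
        simp only [Matrix.mul_apply, Matrix.transpose_apply, Matrix.smul_apply,
          Matrix.one_apply, Matrix.submatrix_apply, id_eq] at key ⊢
        rw [key]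
        by_cases hij : i = j
        · simp [hij]
        · simp [hij, f.2.injective.ne hij]
      have := sum_det_sq (H.submatrix f.1 id) hA
      simpa [Matrix.submatrix_submatrix] using this
    rw [Finset.sum_congr rfl (fun f _ => inner f), Finset.sum_const, Finset.card_univ,
      card_strictMono_fin3, nsmul_eq_mul]
  -- sum of squares counts the nonzero minors
  set Z := (Finset.univ.filter
      (fun p : {f : Fin 3 → Fin n // StrictMono f} × {g : Fin 3 → Fin n // StrictMono g} =>
        (H.submatrix p.1.1 p.2.1).det = 0)).card with hZdef
  have hcount : ∑ p : {f : Fin 3 → Fin n // StrictMono f} × {g : Fin 3 → Fin n // StrictMono g},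
      (H.submatrix p.1.1 p.2.1).det ^ 2
      = 16 * ((Finset.univ.filter
          (fun p : {f : Fin 3 → Fin n // StrictMono f} × {g : Fin 3 → Fin n // StrictMono g} =>
            ¬ (H.submatrix p.1.1 p.2.1).det = 0)).card : ℤ) := by
    rw [← Finset.sum_filter_add_sum_filter_not Finset.univ
      (fun p : {f : Fin 3 → Fin n // StrictMono f} × {g : Fin 3 → Fin n // StrictMono g} =>
        (H.submatrix p.1.1 p.2.1).det = 0)]
    have h1 : ∑ p ∈ Finset.univ.filter
        (fun p : {f : Fin 3 → Fin n // StrictMono f} × {g : Fin 3 → Fin n // StrictMono g} =>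
          (H.submatrix p.1.1 p.2.1).det = 0), (H.submatrix p.1.1 p.2.1).det ^ 2 = 0 := by
      refine Finset.sum_eq_zero fun p hp => ?_
      rw [Finset.mem_filter] at hp
      rw [hp.2]; ring
    have h2 : ∑ p ∈ Finset.univ.filter
        (fun p : {f : Fin 3 → Fin n // StrictMono f} × {g : Fin 3 → Fin n // StrictMono g} =>
          ¬ (H.submatrix p.1.1 p.2.1).det = 0), (H.submatrix p.1.1 p.2.1).det ^ 2
        = 16 * ((Finset.univ.filter
          (fun p : {f : Fin 3 → Fin n // StrictMono f} × {g : Fin 3 → Fin n // StrictMono g} =>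
            ¬ (H.submatrix p.1.1 p.2.1).det = 0)).card : ℤ) := by
      rw [Finset.sum_congr rfl (fun p hp => ?_), Finset.sum_const, nsmul_eq_mul, mul_comm]
      rw [Finset.mem_filter] at hp
      rcases det_pm_one (H.submatrix p.1.1 p.2.1) (fun i j => hH1 _ _) with h | h
      · exact absurd h hp.2
      · exact h
    rw [h1, h2, zero_add]
  have hcard : Z + (Finset.univ.filter
      (fun p : {f : Fin 3 → Fin n // StrictMono f} × {g : Fin 3 → Fin n // StrictMono g} =>
        ¬ (H.submatrix p.1.1 p.2.1).det = 0)).card = C * C := by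
    rw [hZdef, Finset.card_filter_add_card_filter_not, Finset.card_univ,
      Fintype.card_prod, card_strictMono_fin3]
  -- the integer identity
  have hZint : 16 * (Z : ℤ) + (C : ℤ) * (n : ℤ) ^ 3 = 16 * (C : ℤ) * (C : ℤ) := by
    have h1 := hsum.symm.trans hcount
    have h2 : ((Z : ℤ)) + ((Finset.univ.filter
        (fun p : {f : Fin 3 → Fin n // StrictMono f} × {g : Fin 3 → Fin n // StrictMono g} =>
          ¬ (H.submatrix p.1.1 p.2.1).det = 0)).card : ℤ) = (C : ℤ) * (C : ℤ) := by
      exact_mod_cast congrArg (fun x : ℕ => (x : ℤ)) hcard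
    linarith
  -- cast everything to ℚ
  have hC : ((C : ℕ) : ℚ) = (n : ℚ) * ((n : ℚ) - 1) * ((n : ℚ) - 2) / 6 := by
    have hd : n.descFactorial 3 = 6 * n.choose 3 := by
      rw [Nat.descFactorial_eq_factorial_mul_choose]
      norm_num [Nat.factorial]
    have hd2 : ((n.descFactorial 3 : ℕ) : ℚ) = (n : ℚ) * ((n : ℚ) - 1) * ((n : ℚ) - 2) := by
      simp only [Nat.descFactorial_succ, Nat.descFactorial_zero, mul_one, Nat.sub_zero]
      push_cast [Nat.cast_sub (by omega : 1 ≤ n), Nat.cast_sub (by omega : 2 ≤ n)]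
      ring
    have := hd ▸ hd2
    push_cast at this
    rw [hCdef]
    linarith
  have hZQ : 16 * (Z : ℚ) + (C : ℚ) * (n : ℚ) ^ 3 = 16 * (C : ℚ) * (C : ℚ) := by
    exact_mod_cast congrArg (fun x : ℤ => (x : ℚ)) hZint
  rw [hC] at hZQ
  have hkey : (16 : ℚ) * ((n : ℚ) ^ 2 * ((n : ℚ) - 1) * ((n : ℚ) - 2) * ((n : ℚ) - 4) *
      (5 * (n : ℚ) - 4) / 288)
      = 16 * ((n : ℚ) * ((n : ℚ) - 1) * ((n : ℚ) - 2) / 6) * ((n : ℚ) * ((n : ℚ) - 1) * ((n : ℚ) - 2) / 6)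
        - ((n : ℚ) * ((n : ℚ) - 1) * ((n : ℚ) - 2) / 6) * (n : ℚ) ^ 3 := by
    ring
  linarith
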